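/- For any two PDESs H1 and H2 over the same event set Σ, the probabilistic language generated by their product equals the intersection of their generated probabilistic languages: L_{H1 × H2} = L_{H1} ∩ L_{H2}. -/
import Mathlib


open scoped BigOperators

noncomputable section

/-- Chain product: given step weights `w s σ` (interpreted as the conditional
probability of event `σ` after string `s`), `chainProd w pre rest` multiplies the
weights along `rest`, starting from the already-consumed prefix `pre`. -/
def chainProd {E : Type*} (w : List E → E → ℝ) : List E → List E → ℝ
  | _, [] => 1
  | pre, σ :: rest => w pre σ * chainProd w (pre ++ [σ]) rest

/-- The (probabilistic) language generated by step weights `w`: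
`langOf w [] = 1` and `langOf w (s ++ [σ]) = langOf w s * w s σ`. -/
def langOf {E : Type*} (w : List E → E → ℝ) : List E → ℝ := chainProd w []

/-- A probabilistic language over a finite event set `E`. -/
structure PLang (E : Type*) [Fintype E] where
  toFun : List E → ℝ
  nonneg : ∀ s, 0 ≤ toFun s
  le_one : ∀ s, toFun s ≤ 1
  eps : toFun [] = 1
  step : ∀ s, (∑ σ : E, toFun (s ++ [σ])) ≤ toFun s

/-- `L1` is a probabilistic sublanguage of `L2`. -/
def PSub {E : Type*} (L1 L2 : List E → ℝ) : Prop :=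
  (∀ s, 0 < L1 s → 0 < L2 s) ∧
  ∀ s, 0 < L1 s → ∀ σ : E, L1 (s ++ [σ]) / L1 s ≤ L2 (s ++ [σ]) / L2 s

/-- Intersection of probabilistic languages. -/
def pInter {E : Type*} (L1 L2 : List E → ℝ) : List E → ℝ :=
  langOf fun s σ => min (L1 (s ++ [σ]) / L1 s) (L2 (s ++ [σ]) / L2 s)

/-- Natural projection erasing the events outside the observable set `So`. -/
def proj {E : Type*} [DecidableEq E] (So : Finset E) (s : List E) : List E :=
  s.filter fun σ => decide (σ ∈ So)

/-- A probabilistic discrete event system (probabilistic automaton). -/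
structure PDES (X : Type*) (E : Type*) [Fintype E] where
  x0 : X
  trans : X → E → Option X
  prob : X → E → ℝ
  prob_nonneg : ∀ x σ, 0 ≤ prob x σ
  prob_le_one : ∀ x σ, prob x σ ≤ 1
  prob_pos_iff : ∀ x σ, 0 < prob x σ ↔ (trans x σ).isSome
  sum_le_one : ∀ x, (∑ σ : E, prob x σ) ≤ 1

/-- Extension of the partial transition function to strings. -/
def PDES.transStar {X E : Type*} [Fintype E] (G : PDES X E) (s : List E) : Option X :=
  s.foldl (fun ox σ => ox.bind fun x => G.trans x σ) (some G.x0)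

/-- Step weight of a PDES: `ρ(δ(x0,s),σ)` when `δ(x0,s)` is defined, `0` otherwise. -/
def PDES.w {X E : Type*} [Fintype E] (G : PDES X E) (s : List E) (σ : E) : ℝ :=
  (G.transStar s).elim 0 fun x => G.prob x σ

/-- The probabilistic language generated by a PDES. -/
def PDES.lang {X E : Type*} [Fintype E] (G : PDES X E) : List E → ℝ := langOf G.w

/-- The set of control patterns: subsets of events containing every uncontrollable event. -/
def ControlPatterns {E : Type*} [Fintype E] [DecidableEq E] (Sc : Finset E) :
    Finset (Finset E) :=
  Finset.univ.filter fun θ => Scᶜ ⊆ θ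

/-- `Sp` is a probabilistic P-supervisor for `G`: to every observation of a string in the
support of `L_G` it assigns a probability distribution on the control patterns. -/
def IsSupervisor {X E : Type*} [Fintype E] [DecidableEq E] (G : PDES X E)
    (Sc So : Finset E) (Sp : List E → Finset E → ℝ) : Prop :=
  ∀ s : List E, 0 < G.lang s →
    (∀ θ ∈ ControlPatterns Sc, 0 ≤ Sp (proj So s) θ) ∧
    (∑ θ ∈ ControlPatterns Sc, Sp (proj So s) θ) = 1

/-- The controlled probabilistic language `L_{Sp/G}`. -/
def supLang {X E : Type*} [Fintype E] [DecidableEq E] (G : PDES X E)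
    (Sc So : Finset E) (Sp : List E → Finset E → ℝ) : List E → ℝ :=
  langOf fun s σ =>
    G.w s σ * ∑ θ ∈ (ControlPatterns Sc).filter (fun θ => σ ∈ θ), Sp (proj So s) θ

/-- `K` is a scaling-factor function for `G`: on every observation of a string in the
support of `L_G` it takes values in `[0,1]` and equals `1` on uncontrollable events. -/
def IsScaling {X E : Type*} [Fintype E] [DecidableEq E] (G : PDES X E)
    (Sc So : Finset E) (K : List E → E → ℝ) : Prop :=
  ∀ s : List E, 0 < G.lang s → ∀ σ : E,
    0 ≤ K (proj So s) σ ∧ K (proj So s) σ ≤ 1 ∧ (σ ∉ Sc → K (proj So s) σ = 1)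

/-- The controlled probabilistic language `L_{K/G}`. -/
def kLang {X E : Type*} [Fintype E] [DecidableEq E] (G : PDES X E)
    (So : Finset E) (K : List E → E → ℝ) : List E → ℝ :=
  langOf fun s σ => G.w s σ * K (proj So s) σ

/-- Probabilistic controllability (language form). -/
def ProbControllable {E : Type*} (L M : List E → ℝ) (Sc : Finset E) : Prop :=
  ∀ s : List E, 0 < L s → ∀ σ : E, σ ∉ Sc →
    L (s ++ [σ]) / L s = M (s ++ [σ]) / M s

/-- Probabilistic observability (language form). -/
def ProbObservable {E : Type*} [DecidableEq E] (L M : List E → ℝ)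
    (Sc So : Finset E) : Prop :=
  ∀ s1 s2 : List E, 0 < L s1 → 0 < L s2 → proj So s1 = proj So s2 →
    ∀ σ ∈ Sc,
      (M (s1 ++ [σ]) / M s1) * (L (s2 ++ [σ]) / L s2) =
      (M (s2 ++ [σ]) / M s2) * (L (s1 ++ [σ]) / L s1)

/-- Probabilistic controllability (automata form). -/
def AutControllable {X Q E : Type*} [Fintype E] (G : PDES X E) (H : PDES Q E)
    (Sc : Finset E) : Prop :=
  ∀ s : List E, 0 < H.lang s → ∀ x q,
    G.transStar s = some x → H.transStar s = some q →
    ∀ σ : E, σ ∉ Sc → H.prob q σ = G.prob x σ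

/-- Probabilistic observability (automata form). -/
def AutObservable {X Q E : Type*} [Fintype E] [DecidableEq E] (G : PDES X E)
    (H : PDES Q E) (Sc So : Finset E) : Prop :=
  ∀ s1 s2 : List E, 0 < H.lang s1 → 0 < H.lang s2 → proj So s1 = proj So s2 →
    ∀ x1 q1 x2 q2,
      G.transStar s1 = some x1 → H.transStar s1 = some q1 →
      G.transStar s2 = some x2 → H.transStar s2 = some q2 →
      ∀ σ ∈ Sc, G.prob x1 σ * H.prob q2 σ = G.prob x2 σ * H.prob q1 σ

/-- Reachability in the controllability-testing automaton `G_tc`.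
States are pairs `(x,q)` (as `Sum.inl`) together with the special state `d` (`Sum.inr ()`). -/
inductive TcReach {X Q E : Type*} [Fintype E] (G : PDES X E) (H : PDES Q E)
    (Sc : Finset E) : (X × Q) ⊕ Unit → Prop
  | init : TcReach G H Sc (Sum.inl (G.x0, H.x0))
  | good (x q x' q' σ) : TcReach G H Sc (Sum.inl (x, q)) →
      G.trans x σ = some x' → H.trans q σ = some q' →
      ((σ ∉ Sc ∧ G.prob x σ = H.prob q σ) ∨ σ ∈ Sc) →
      TcReach G H Sc (Sum.inl (x', q'))
  | bad (x q σ) : TcReach G H Sc (Sum.inl (x, q)) →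
      σ ∉ Sc → G.prob x σ ≠ H.prob q σ →
      TcReach G H Sc (Sum.inr ())

/-- Reachability in the observability-testing automaton `G_to`.
States are 4-tuples `(x1,q1,x2,q2)` (as `Sum.inl`) together with the special state `d`. -/
inductive ToReach {X Q E : Type*} [Fintype E] (G : PDES X E) (H : PDES Q E)
    (Sc So : Finset E) : (X × Q × X × Q) ⊕ Unit → Prop
  | init : ToReach G H Sc So (Sum.inl (G.x0, H.x0, G.x0, H.x0))
  | sync (x1 q1 x2 q2 x1' q1' x2' q2' σ) :
      ToReach G H Sc So (Sum.inl (x1, q1, x2, q2)) →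
      G.trans x1 σ = some x1' → H.trans q1 σ = some q1' →
      G.trans x2 σ = some x2' → H.trans q2 σ = some q2' →
      (σ ∉ Sc ∨ (σ ∈ Sc ∧ G.prob x1 σ * H.prob q2 σ = G.prob x2 σ * H.prob q1 σ)) →
      ToReach G H Sc So (Sum.inl (x1', q1', x2', q2'))
  | bad (x1 q1 x2 q2 σ) :
      ToReach G H Sc So (Sum.inl (x1, q1, x2, q2)) →
      σ ∈ Sc → G.prob x1 σ * H.prob q2 σ ≠ G.prob x2 σ * H.prob q1 σ →
      ToReach G H Sc So (Sum.inr ())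
  | left (x1 q1 x2 q2 x1' q1' σ) :
      ToReach G H Sc So (Sum.inl (x1, q1, x2, q2)) → σ ∉ So →
      G.trans x1 σ = some x1' → H.trans q1 σ = some q1' →
      ToReach G H Sc So (Sum.inl (x1', q1', x2, q2))
  | right (x1 q1 x2 q2 x2' q2' σ) :
      ToReach G H Sc So (Sum.inl (x1, q1, x2, q2)) → σ ∉ So →
      G.trans x2 σ = some x2' → H.trans q2 σ = some q2' →
      ToReach G H Sc So (Sum.inl (x1, q1, x2', q2'))

/-- `H` is a probabilistic subautomaton of `G`, as witnessed by the state inclusion `e`. -/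
def SubautomatonVia {Q X E : Type*} [Fintype E] (H : PDES Q E) (G : PDES X E)
    (e : Q → X) : Prop :=
  Function.Injective e ∧ e H.x0 = G.x0 ∧
  ∀ q σ, H.prob q σ ≤ G.prob (e q) σ ∧
    ∀ q', H.trans q σ = some q' → G.trans (e q) σ = some (e q')

/-- The product of two PDESs. -/
def PDES.prod {X Q E : Type*} [Fintype E] (G : PDES X E) (H : PDES Q E) :
    PDES (X × Q) E where
  x0 := (G.x0, H.x0)
  trans := fun p σ => (G.trans p.1 σ).bind fun x => (H.trans p.2 σ).map fun q => (x, q)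
  prob := fun p σ => min (G.prob p.1 σ) (H.prob p.2 σ)
  prob_nonneg := fun p σ => le_min (G.prob_nonneg _ _) (H.prob_nonneg _ _)
  prob_le_one := fun p σ => le_trans (min_le_left _ _) (G.prob_le_one _ _)
  prob_pos_iff := by
    intro p σ
    rw [lt_min_iff, G.prob_pos_iff, H.prob_pos_iff]
    cases hG : G.trans p.1 σ <;> cases hH : H.trans p.2 σ <;> simp [hG, hH]
  sum_le_one := fun p =>
    le_trans (Finset.sum_le_sum fun σ _ => min_le_left _ _) (G.sum_le_one p.1)

end

private lemma chainProd_append' {E : Type*} (w : List E → E → ℝ) (σ : E) :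
    ∀ (rest pre : List E),
      chainProd w pre (rest ++ [σ]) = chainProd w pre rest * w (pre ++ rest) σ := by
  intro rest
  induction rest with
  | nil => intro pre; simp [chainProd]
  | cons τ rest ih =>
      intro pre
      have h1 : (τ :: rest) ++ [σ] = τ :: (rest ++ [σ]) := rfl
      rw [h1, chainProd, chainProd, ih (pre ++ [τ]), List.append_assoc, mul_assoc]
      rfl

private lemma langOf_append' {E : Type*} (w : List E → E → ℝ) (s : List E) (σ : E) :
    langOf w (s ++ [σ]) = langOf w s * w s σ := by
  simpa [langOf] using chainProd_append' w σ s []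

private lemma chainProd_nonneg' {E : Type*} {w : List E → E → ℝ}
    (hw : ∀ s σ, 0 ≤ w s σ) :
    ∀ (rest pre : List E), 0 ≤ chainProd w pre rest := by
  intro rest
  induction rest with
  | nil => intro pre; simp [chainProd]
  | cons τ rest ih =>
      intro pre
      exact mul_nonneg (hw _ _) (ih _)

private lemma PDES.w_nonneg' {X E : Type*} [Fintype E] (G : PDES X E)
    (s : List E) (σ : E) : 0 ≤ G.w s σ := by
  unfold PDES.w
  cases G.transStar s with
  | none => simp
  | some x => simpa using G.prob_nonneg x σ

private lemma PDES.lang_nonneg' {X E : Type*} [Fintype E] (G : PDES X E)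
    (s : List E) : 0 ≤ G.lang s :=
  chainProd_nonneg' (PDES.w_nonneg' G) s []

private lemma PDES.transStar_append' {X E : Type*} [Fintype E] (G : PDES X E)
    (s : List E) (σ : E) :
    G.transStar (s ++ [σ]) = (G.transStar s).bind fun x => G.trans x σ := by
  simp [PDES.transStar, List.foldl_append]

private lemma prod_lang_aux {X Q E : Type*} [Fintype E]
    (G : PDES X E) (H : PDES Q E) (s : List E) :
    (G.prod H).lang s = pInter G.lang H.lang s ∧
    (0 < (G.prod H).lang s → 0 < G.lang s ∧ 0 < H.lang s ∧
      ∃ x q, G.transStar s = some x ∧ H.transStar s = some q ∧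
        (G.prod H).transStar s = some (x, q)) := by
  induction s using List.reverseRecOn with
  | nil =>
      constructor
      · rfl
      · intro _
        refine ⟨?_, ?_, G.x0, H.x0, rfl, rfl, rfl⟩
        · show (0:ℝ) < 1; norm_num
        · show (0:ℝ) < 1; norm_num
  | append_singleton s σ ih =>
      obtain ⟨heq, hpos⟩ := ih
      have hlangP : (G.prod H).lang (s ++ [σ]) = (G.prod H).lang s * (G.prod H).w s σ :=
        langOf_append' _ _ _
      have hpI : pInter G.lang H.lang (s ++ [σ]) =
          pInter G.lang H.lang s *
            min (G.lang (s ++ [σ]) / G.lang s) (H.lang (s ++ [σ]) / H.lang s) :=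
        langOf_append' _ _ _
      by_cases h0 : 0 < (G.prod H).lang s
      · obtain ⟨hG, hH, x, q, hx, hq, hxq⟩ := hpos h0
        have hwG : G.w s σ = G.prob x σ := by simp [PDES.w, hx]
        have hwH : H.w s σ = H.prob q σ := by simp [PDES.w, hq]
        have hwP : (G.prod H).w s σ = min (G.prob x σ) (H.prob q σ) := by
          unfold PDES.w; rw [hxq]; rfl
        have hGl : G.lang (s ++ [σ]) = G.lang s * G.w s σ := langOf_append' _ _ _
        have hHl : H.lang (s ++ [σ]) = H.lang s * H.w s σ := langOf_append' _ _ _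
        have hGr : G.lang (s ++ [σ]) / G.lang s = G.w s σ := by
          rw [hGl]; exact mul_div_cancel_left₀ _ hG.ne'
        have hHr : H.lang (s ++ [σ]) / H.lang s = H.w s σ := by
          rw [hHl]; exact mul_div_cancel_left₀ _ hH.ne'
        constructor
        · rw [hlangP, hpI, heq, hGr, hHr, hwP, hwG, hwH]
        · intro hp
          rw [hlangP] at hp
          have hwpos : 0 < (G.prod H).w s σ := by
            rcases mul_pos_iff.mp hp with h | h
            · exact h.2
            · exact absurd h.1 (not_lt.mpr ((G.prod H).lang_nonneg' s))
          rw [hwP, lt_min_iff] at hwpos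
          obtain ⟨hpx, hpq⟩ := hwpos
          have htx := (G.prob_pos_iff x σ).mp hpx
          have htq := (H.prob_pos_iff q σ).mp hpq
          obtain ⟨x', hx'⟩ := Option.isSome_iff_exists.mp htx
          obtain ⟨q', hq'⟩ := Option.isSome_iff_exists.mp htq
          refine ⟨?_, ?_, x', q', ?_, ?_, ?_⟩
          · rw [hGl, hwG]; exact mul_pos hG hpx
          · rw [hHl, hwH]; exact mul_pos hH hpq
          · rw [PDES.transStar_append', hx]; simpa using hx'
          · rw [PDES.transStar_append', hq]; simpa using hq'
          · rw [PDES.transStar_append', hxq]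
            simp [PDES.prod, hx', hq']
      · have hz : (G.prod H).lang s = 0 :=
          le_antisymm (not_lt.mp h0) ((G.prod H).lang_nonneg' s)
        constructor
        · rw [hlangP, hpI, hz, ← heq, hz, zero_mul, zero_mul]
        · intro hp
          rw [hlangP, hz, zero_mul] at hp
          exact absurd hp (lt_irrefl 0)

/-- the language of a product PDES is the intersection of the languages. -/
theorem prod_lang_eq_pInter {X Q E : Type*} [Fintype E]
    (G : PDES X E) (H : PDES Q E) :
    (G.prod H).lang = pInter G.lang H.lang := by
  funext s
  exact (prod_lang_aux G H s).1
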